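/- Let ν > 1 and 0 < r₋ < r₊ be real numbers. With s := √(r₊ r₋ (ν²+3)), R²(r) := (r/4)·[3(ν²−1)r + (ν²+3)(r₊+r₋) − 4νs], N²(r) := (ν²+3)(r−r₊)(r−r₋)/(4R²(r)), N^θ(r) := (2νr − s)/(2R²(r)), Ω_H := −2/(2νr₊ − s), and r_C := (4ν²r₊ − (ν²+3)r₋)/(3(ν²−1)): one has r_C > r₊, and the squared norm h(r) := −N²(r) + R²(r)(N^θ(r) + Ω_H)² of the horizon-generating Killing vector χ = ∂_t + Ω_H∂_θ satisfies h(r) < 0 for r₊ < r < r_C, h(r_C) = 0, and h(r) > 0 for r > r_C. That is, χ is timelike precisely between the horizon and the speed-of-light surface r = r_C. -/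

import Mathlib

set_option maxHeartbeats 1600000
set_option linter.all false


/-- s := √(r₊ r₋ (ν²+3)). -/
noncomputable def sBH (ν rp rm : ℝ) : ℝ := Real.sqrt (rp * rm * (ν ^ 2 + 3))

/-- R²(r) := (r/4)·[3(ν²−1)r + (ν²+3)(r₊+r₋) − 4νs]. -/
noncomputable def R2 (ν rp rm r : ℝ) : ℝ :=
  r / 4 * (3 * (ν ^ 2 - 1) * r + (ν ^ 2 + 3) * (rp + rm) - 4 * ν * sBH ν rp rm)

/-- N²(r) := (ν²+3)(r−r₊)(r−r₋)/(4R²(r)). -/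
noncomputable def N2 (ν rp rm r : ℝ) : ℝ :=
  (ν ^ 2 + 3) * (r - rp) * (r - rm) / (4 * R2 ν rp rm r)

/-- N^θ(r) := (2νr − s)/(2R²(r)). -/
noncomputable def Nθ (ν rp rm r : ℝ) : ℝ :=
  (2 * ν * r - sBH ν rp rm) / (2 * R2 ν rp rm r)

/-- Ω_H := −2/(2νr₊ − s). -/
noncomputable def ΩH (ν rp rm : ℝ) : ℝ := -2 / (2 * ν * rp - sBH ν rp rm)

/-- The speed-of-light radius r_C := (4ν²r₊ − (ν²+3)r₋)/(3(ν²−1)). -/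
noncomputable def rC (ν rp rm : ℝ) : ℝ :=
  (4 * ν ^ 2 * rp - (ν ^ 2 + 3) * rm) / (3 * (ν ^ 2 - 1))

/-- Key polynomial identity (modulo S² = r₊r₋(ν²+3)) for the numerator of h. -/
lemma polyid (ν rp rm r S : ℝ) (hs2 : S ^ 2 = rp * rm * (ν ^ 2 + 3)) :
    -((ν ^ 2 + 3) * (r - rp) * (r - rm)) * (2 * ν * rp - S) ^ 2
      + ((2 * ν * r - S) * (2 * ν * rp - S)
          - r * (3 * (ν ^ 2 - 1) * r + (ν ^ 2 + 3) * (rp + rm) - 4 * ν * S)) ^ 2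
    = (r - rp) * (3 * (ν ^ 2 - 1) * r - (4 * ν ^ 2 * rp - (ν ^ 2 + 3) * rm))
        * (r * (3 * (ν ^ 2 - 1) * r + (ν ^ 2 + 3) * (rp + rm) - 4 * ν * S)) := by
  linear_combination (S ^ 2 + 3 * r ^ 2 - 3 * rm * r - 3 * rp * r + 4 * ν * r * S
    - 4 * ν * rp * S - 3 * ν ^ 2 * r ^ 2 - ν ^ 2 * rm * r - ν ^ 2 * rp * r
    + 4 * ν ^ 2 * rp ^ 2) * hs2

/-- The squared norm h(r) := −N²(r) + R²(r)(N^θ(r) + Ω_H)² of the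
horizon-generating Killing vector χ = ∂_t + Ω_H ∂_θ. -/
noncomputable def hNorm (ν rp rm r : ℝ) : ℝ :=
  -N2 ν rp rm r + R2 ν rp rm r * (Nθ ν rp rm r + ΩH ν rp rm) ^ 2

/-- r_C > r₊, and χ = ∂_t + Ω_H∂_θ is timelike precisely between
the horizon and the speed-of-light surface: h(r) < 0 for r₊ < r < r_C,
h(r_C) = 0, and h(r) > 0 for r > r_C. -/
theorem stmt7 (ν rp rm : ℝ) (hν : 1 < ν) (hrm : 0 < rm) (hr : rm < rp) :
    rp < rC ν rp rm ∧
    (∀ r : ℝ, rp < r → r < rC ν rp rm → hNorm ν rp rm r < 0) ∧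
    hNorm ν rp rm (rC ν rp rm) = 0 ∧
    (∀ r : ℝ, rC ν rp rm < r → 0 < hNorm ν rp rm r) := by
  have hrp : 0 < rp := hrm.trans hr
  have hν2 : (1 : ℝ) < ν ^ 2 := by nlinarith
  have hν0 : (0 : ℝ) < ν := by linarith
  set S := sBH ν rp rm with hSdef
  have hS0 : 0 ≤ S := Real.sqrt_nonneg _
  have hs2 : S ^ 2 = rp * rm * (ν ^ 2 + 3) := by
    rw [hSdef, sBH, sq, Real.mul_self_sqrt (by positivity)]
  have hD : 0 < 4 * ν ^ 2 * rp - (ν ^ 2 + 3) * rm := by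
    nlinarith [mul_pos (show (0:ℝ) < 4 * ν ^ 2 by nlinarith) (sub_pos.mpr hr),
      mul_pos (show (0:ℝ) < ν ^ 2 - 1 by linarith) hrm]
  have hM : 0 < 4 * ν ^ 2 * rp + (ν ^ 2 + 3) * rm := by nlinarith
  -- A := 2νr₊ − S > 0
  have hS2lt : S ^ 2 < (2 * ν * rp) ^ 2 := by nlinarith [mul_lt_mul_of_pos_left hD hrp]
  have hA : 0 < 2 * ν * rp - S := by
    nlinarith [hS2lt, hS0, mul_pos hν0 hrp]
  -- the bracket is positive for r ≥ r₊
  have hSS : (4 * ν * S) ^ 2 = (4 * ν ^ 2 * rp + (ν ^ 2 + 3) * rm) ^ 2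
      - (4 * ν ^ 2 * rp - (ν ^ 2 + 3) * rm) ^ 2 := by
    linear_combination (16 * ν ^ 2) * hs2
  have hkey : 4 * ν * S < 4 * ν ^ 2 * rp + (ν ^ 2 + 3) * rm := by
    nlinarith [hSS, hM, mul_pos hD hD, mul_nonneg (mul_nonneg (by norm_num : (0:ℝ) ≤ 4) hν0.le) hS0]
  have hB : ∀ x : ℝ, rp ≤ x →
      0 < 3 * (ν ^ 2 - 1) * x + (ν ^ 2 + 3) * (rp + rm) - 4 * ν * S := by
    intro x hx
    nlinarith [hkey, mul_le_mul_of_nonneg_left hx (by nlinarith : (0:ℝ) ≤ 3 * (ν ^ 2 - 1))]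
  -- rC > rp
  have hrC : rp < rC ν rp rm := by
    rw [rC, lt_div_iff₀ (by nlinarith : (0:ℝ) < 3 * (ν ^ 2 - 1))]
    nlinarith
  -- closed form for hNorm at any x > rp (so also at x = rC)
  have hform : ∀ x : ℝ, rp < x →
      hNorm ν rp rm x = 3 * (ν ^ 2 - 1) * (x - rp) * (x - rC ν rp rm)
        / (2 * ν * rp - S) ^ 2 := by
    intro x hx
    have hx0 : (0:ℝ) < x := hrp.trans hx
    have hbx := hB x hx.le
    have hAne : 2 * ν * rp - S ≠ 0 := ne_of_gt hA
    have hxne : x ≠ 0 := ne_of_gt hx0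
    have hbne : 3 * (ν ^ 2 - 1) * x + (ν ^ 2 + 3) * (rp + rm) - 4 * ν * S ≠ 0 :=
      ne_of_gt hbx
    have h1 : hNorm ν rp rm x =
        (-((ν ^ 2 + 3) * (x - rp) * (x - rm)) * (2 * ν * rp - S) ^ 2
          + ((2 * ν * x - S) * (2 * ν * rp - S)
              - x * (3 * (ν ^ 2 - 1) * x + (ν ^ 2 + 3) * (rp + rm) - 4 * ν * S)) ^ 2)
        / ((x * (3 * (ν ^ 2 - 1) * x + (ν ^ 2 + 3) * (rp + rm) - 4 * ν * S))
            * (2 * ν * rp - S) ^ 2) := by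
      rw [hNorm, N2, Nθ, ΩH, R2, ← hSdef]
      generalize 3 * (ν ^ 2 - 1) * x + (ν ^ 2 + 3) * (rp + rm) - 4 * ν * S = B at hbne ⊢
      generalize 2 * ν * rp - S = A at hAne ⊢
      field_simp
      ring
    rw [h1, polyid ν rp rm x S hs2]
    rw [rC]
    have hbig : x * (3 * (ν ^ 2 - 1) * x + (ν ^ 2 + 3) * (rp + rm) - 4 * ν * S) ≠ 0 :=
      mul_ne_zero hxne hbne
    rw [mul_comm (x * (3 * (ν ^ 2 - 1) * x + (ν ^ 2 + 3) * (rp + rm) - 4 * ν * S))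
      ((2 * ν * rp - S) ^ 2), mul_div_mul_right _ _ hbig]
    rw [div_eq_div_iff (pow_ne_zero 2 hAne) (pow_ne_zero 2 hAne)]
    have h3ne : (3 * (ν ^ 2 - 1)) ≠ 0 := by nlinarith
    have h3ne' : (ν ^ 2 - 1) ≠ 0 := by nlinarith
    field_simp
  refine ⟨hrC, ?_, ?_, ?_⟩
  · intro r hr1 hr2
    rw [hform r hr1]
    apply div_neg_of_neg_of_pos
    · have : 0 < 3 * (ν ^ 2 - 1) * (r - rp) := by nlinarith
      nlinarith
    · positivity
  · rw [hform _ hrC]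
    simp
  · intro r hr1
    rw [hform r (hrC.trans hr1)]
    apply div_pos
    · have : 0 < 3 * (ν ^ 2 - 1) * (r - rp) := by nlinarith [hrC.trans hr1]
      nlinarith
    · positivity
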